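/- Let G be the (r+1) × n matrix over F_q defined by g_{ℓ,(i,j)} = γ^{ℓ·a_{ij}} for 1 ≤ ℓ ≤ r and g_{r+1,(i,j)} = γ^{(r+1)·a_{ij}} + (−1)^{r+1}, where γ is primitive in F_q, the exponents a_{ij} ∈ Z_{q−1} are distinct, and the index set is partitioned into repair groups R_i = {(i,1), ..., (i,r+1)} whose exponent sets A_i = {a_{i1}, ..., a_{i,r+1}} satisfy: a sum of r+1 distinct exponents is ≡ 0 mod q−1 iff they form some A_i. Then the row span C of G is an (n, r+1) linear code such that for every transversal T (a set meeting each R_i in exactly one index), the punctured code C|_T is MDS. -/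

import Mathlib

/-- MDS property on transversals: for the generator matrix `G` of the construction,
built from distinct exponents `a i j ∈ Z_{q-1}` such that `r+1` distinct exponents sum
to `0` iff they form one of the groups `A_i`, the restriction of `G` to the columns of
any transversal has every `r+1` of its columns linearly independent (so the punctured
code is MDS). -/
theorem statement16 (q r m : ℕ) (hr : 1 ≤ r) (F : Type*) [Field F] [Fintype F]
    (hF : Fintype.card F = q) (γ : F) (hγ : IsPrimitiveRoot γ (q - 1))
    (a : Fin m → Fin (r + 1) → ZMod (q - 1))
    (hinj : Function.Injective fun p : Fin m × Fin (r + 1) => a p.1 p.2)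
    (hzs : ∀ S : Finset (ZMod (q - 1)), S.card = r + 1 →
      (∀ x ∈ S, ∃ i j, x = a i j) →
      ((∑ x ∈ S, x) = 0 ↔ ∃ i, S = Finset.univ.image (a i)))
    (G : Matrix (Fin (r + 1)) (Fin m × Fin (r + 1)) F)
    (hG : ∀ ℓ p, G ℓ p =
      if (ℓ : ℕ) < r then γ ^ (((ℓ : ℕ) + 1) * (a p.1 p.2).val)
      else γ ^ ((r + 1) * (a p.1 p.2).val) + (-1) ^ (r + 1))
    (τ : Fin m → Fin (r + 1))
    (s : Fin (r + 1) → Fin m) (hs : Function.Injective s) :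
    LinearIndependent F fun j : Fin (r + 1) => fun ℓ : Fin (r + 1) => G ℓ (s j, τ (s j)) := by
  have hq2 : 2 ≤ q := hF ▸ Fintype.one_lt_card
  haveI : NeZero (q - 1) := ⟨by omega⟩
  set b : Fin (r + 1) → ZMod (q - 1) := fun j => a (s j) (τ (s j)) with hb
  have hbinj : Function.Injective b := by
    intro j j' h
    exact hs (congrArg Prod.fst (hinj (show (fun p : Fin m × Fin (r+1) => a p.1 p.2)
      (s j, τ (s j)) = (fun p : Fin m × Fin (r+1) => a p.1 p.2) (s j', τ (s j')) from h)))
  set x : Fin (r + 1) → F := fun j => γ ^ (b j).val with hx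
  have hxinj : Function.Injective x := by
    intro j j' h
    exact hbinj (ZMod.val_injective _ (hγ.pow_inj (ZMod.val_lt _) (ZMod.val_lt _) h))
  -- sum of the exponents is nonzero
  have hsum : (∑ j, b j) ≠ 0 := by
    intro h0
    set S := Finset.univ.image b with hS
    have hcard : S.card = r + 1 := by
      rw [hS, Finset.card_image_of_injective _ hbinj, Finset.card_univ, Fintype.card_fin]
    have hmem : ∀ y ∈ S, ∃ i j, y = a i j := by
      intro y hy
      obtain ⟨j, -, rfl⟩ := Finset.mem_image.mp hy
      exact ⟨s j, τ (s j), rfl⟩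
    have hS0 : (∑ y ∈ S, y) = 0 := by
      rw [hS, Finset.sum_image (fun j _ j' _ h => hbinj h)]; exact h0
    obtain ⟨i, hi⟩ := (hzs S hcard hmem).mp hS0
    have key : ∀ j, s j = i := by
      intro j
      have hmemS : b j ∈ S := Finset.mem_image_of_mem b (Finset.mem_univ j)
      rw [hi] at hmemS
      obtain ⟨j', -, hj'⟩ := Finset.mem_image.mp hmemS
      exact (congrArg Prod.fst (hinj (show (fun p : Fin m × Fin (r+1) => a p.1 p.2) (i, j') =
        (fun p : Fin m × Fin (r+1) => a p.1 p.2) (s j, τ (s j)) from hj'))).symm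
    have h01 : (0 : Fin (r + 1)) ≠ 1 := by
      intro h
      have := congrArg Fin.val h
      rw [Fin.val_zero, Fin.val_one', Nat.mod_eq_of_lt (by omega)] at this
      exact absurd this (by omega)
    exact h01 (hs ((key 0).trans (key 1).symm))
  have hprod : (∏ j, x j) ≠ 1 := by
    intro h1
    apply hsum
    have hpow : γ ^ (∑ j, (b j).val) = 1 := by
      rw [← Finset.prod_pow_eq_pow_sum]; exact h1
    have hdvd : (q - 1) ∣ ∑ j, (b j).val := (hγ.pow_eq_one_iff_dvd _).mp hpow
    calc (∑ j, b j) = ((∑ j, (b j).val : ℕ) : ZMod (q - 1)) := by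
          rw [Nat.cast_sum]
          simp [ZMod.natCast_zmod_val]
      _ = 0 := (ZMod.natCast_eq_zero_iff _ _).mpr hdvd
  -- the matrix of the selected columns
  set M : Matrix (Fin (r + 1)) (Fin (r + 1)) F :=
    Matrix.of (fun ℓ j => G ℓ (s j, τ (s j))) with hM
  set V : Matrix (Fin (r + 1)) (Fin (r + 1)) F := Matrix.vandermonde x with hV
  have hdetV : V.det ≠ 0 := Matrix.det_vandermonde_ne_zero_iff.mpr hxinj
  set c : F := (-1) ^ (r + 1) with hc
  set A : Matrix (Fin (r + 1)) (Fin (r + 1)) F :=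
    Matrix.of (fun ℓ j => x j ^ ((ℓ : ℕ) + 1)) with hA
  have hAV : A = Matrix.of (fun ℓ j => x j * V.transpose ℓ j) := by
    ext ℓ j
    simp [hA, hV, Matrix.vandermonde, pow_succ']
  have hdetA : A.det = (∏ j, x j) * V.det := by
    rw [hAV, Matrix.det_mul_row, Matrix.det_transpose]
  -- M as an update of A
  have hMrow : ∀ ℓ j, M ℓ j = if ℓ = Fin.last r then x j ^ (r + 1) + c else A ℓ j := by
    intro ℓ j
    rw [hM, Matrix.of_apply, hG]
    by_cases hℓ : ℓ = Fin.last r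
    · subst hℓ
      rw [if_neg (by simp), if_pos rfl]
      simp [hx, hc, hb, ← pow_mul, mul_comm]
    · have hlt : (ℓ : ℕ) < r := by
        have h1 := ℓ.isLt
        have h2 : (ℓ : ℕ) ≠ r := fun h => hℓ (Fin.ext (h.trans (Fin.val_last r).symm))
        omega
      rw [if_pos hlt, if_neg hℓ]
      simp [hA, hx, hb, ← pow_mul, mul_comm]
  have hMupd : M = A.updateRow (Fin.last r)
      ((fun j => x j ^ (r + 1)) + (fun _ => c)) := by
    ext ℓ j
    rw [hMrow]
    by_cases hℓ : ℓ = Fin.last r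
    · subst hℓ; simp
    · simp [Matrix.updateRow_ne hℓ, hℓ]
  have hArow : (fun j => x j ^ (r + 1)) = A (Fin.last r) := by
    funext j; simp [hA]
  -- the matrix with constant last row
  set C : Matrix (Fin (r + 1)) (Fin (r + 1)) F :=
    A.updateRow (Fin.last r) (fun _ => (1 : F)) with hC
  have hCperm : C = V.transpose.submatrix (finRotate (r + 1)) id := by
    ext ℓ j
    by_cases hℓ : ℓ = Fin.last r
    · subst hℓ
      simp [hC, hV, Matrix.vandermonde, finRotate_last]
    · rw [hC, Matrix.updateRow_ne hℓ]
      simp only [Matrix.submatrix_apply, id_eq, finRotate_succ_apply, Matrix.transpose_apply,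
        hV, Matrix.vandermonde_apply, hA, Matrix.of_apply]
      congr 1
      have : (ℓ : ℕ) < r := by
        have h1 := ℓ.isLt
        have h2 : (ℓ : ℕ) ≠ r := fun h => hℓ (Fin.ext (h.trans (Fin.val_last r).symm))
        omega
      rw [Fin.val_add_one_of_lt (by
        rw [Fin.lt_iff_val_lt_val, Fin.val_last]; exact this)]
  have hdetC : C.det = (-1 : F) ^ r * V.det := by
    rw [hCperm, Matrix.det_permute, sign_finRotate, Matrix.det_transpose]
    push_cast
    ring
  have hdetM : M.det = (∏ j, x j - 1) * V.det := by
    rw [hMupd, Matrix.det_updateRow_add, hArow, Matrix.updateRow_eq_self]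
    have : (fun _ : Fin (r + 1) => c) = c • (fun _ : Fin (r + 1) => (1 : F)) := by
      funext j; simp
    rw [this, Matrix.det_updateRow_smul, ← hC, hdetC, hdetA, hc]
    have hodd : Odd (2 * r + 1) := ⟨r, by ring⟩
    have : (-1 : F) ^ (r + 1) * ((-1 : F) ^ r) = -1 := by
      rw [← pow_add]
      have : r + 1 + r = 2 * r + 1 := by ring
      rw [this, hodd.neg_one_pow]
    rw [← mul_assoc, this]
    ring
  have hdet : M.det ≠ 0 := by
    rw [hdetM]
    exact mul_ne_zero (sub_ne_zero.mpr hprod) hdetV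
  have hunit : IsUnit M := (Matrix.isUnit_iff_isUnit_det M).mpr hdet.isUnit
  exact Matrix.linearIndependent_cols_iff_isUnit.mpr hunit
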